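/- Let m, p, q, r be natural numbers and let A ∈ ℝ^{m×p}, B ∈ ℝ^{m×q}, C ∈ ℝ^{m×r} be real matrices with the same number m of rows. Then the horizontally concatenated matrix [A, B, C] ∈ ℝ^{m×(p+q+r)} satisfies ‖[A, B, C]‖_* ≤ ‖[A, C]‖_* + ‖[B, C]‖_*, where [A, C] ∈ ℝ^{m×(p+r)} and [B, C] ∈ ℝ^{m×(q+r)} are the corresponding horizontal concatenations. -/

import Mathlib

/-- The nuclear norm of a real matrix `M`: the trace of the positive
semidefinite square root of `Mᵀ * M`. -/
noncomputable def nuclearNorm {m n : Type*} [Fintype m] [Fintype n] [DecidableEq n]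
    (M : Matrix m n ℝ) : ℝ :=
  Matrix.trace (let hA := Matrix.posSemidef_conjTranspose_mul_self M;
    hA.1.eigenvectorUnitary.1 * Matrix.diagonal ((↑) ∘ (√·) ∘ hA.1.eigenvalues) *
      (star hA.1.eigenvectorUnitary : Matrix n n ℝ))

noncomputable def Matrix.PosSemidef.sqrt {n : Type*} [Fintype n] [DecidableEq n]
    {A : Matrix n n ℝ} (hA : A.PosSemidef) : Matrix n n ℝ :=
  hA.1.eigenvectorUnitary.1 * Matrix.diagonal ((↑) ∘ (√·) ∘ hA.1.eigenvalues) *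
    (star hA.1.eigenvectorUnitary : Matrix n n ℝ)

lemma Matrix.PosSemidef.posSemidef_sqrt {n : Type*} [Fintype n] [DecidableEq n]
    {A : Matrix n n ℝ} (hA : A.PosSemidef) : hA.sqrt.PosSemidef := by
  unfold Matrix.PosSemidef.sqrt
  have h := (Matrix.PosSemidef.diagonal (n := n) (d := fun i => √(hA.1.eigenvalues i))
    (Pi.le_def.mpr fun i => Real.sqrt_nonneg _)).mul_mul_conjTranspose_same
      (hA.1.eigenvectorUnitary : Matrix n n ℝ)
  convert h using 2 <;> simp [Matrix.star_eq_conjTranspose, Function.comp_def]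

lemma Matrix.PosSemidef.sqrt_mul_self {n : Type*} [Fintype n] [DecidableEq n]
    {A : Matrix n n ℝ} (hA : A.PosSemidef) : hA.sqrt * hA.sqrt = A := by
  unfold Matrix.PosSemidef.sqrt
  have h1 : (star hA.1.eigenvectorUnitary : Matrix n n ℝ) * (hA.1.eigenvectorUnitary : Matrix n n ℝ)
      = 1 := Matrix.mem_unitaryGroup_iff'.mp hA.1.eigenvectorUnitary.2
  conv_rhs => rw [hA.1.spectral_theorem, Unitary.conjStarAlgAut_apply]
  calc _ = (hA.1.eigenvectorUnitary : Matrix n n ℝ) *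
        (Matrix.diagonal ((↑) ∘ (√·) ∘ hA.1.eigenvalues) *
          ((star hA.1.eigenvectorUnitary : Matrix n n ℝ) * (hA.1.eigenvectorUnitary : Matrix n n ℝ))
          * Matrix.diagonal ((↑) ∘ (√·) ∘ hA.1.eigenvalues)) *
        (star hA.1.eigenvectorUnitary : Matrix n n ℝ) := by simp only [Matrix.mul_assoc]
    _ = _ := by
      rw [h1, Matrix.mul_one, Matrix.diagonal_mul_diagonal]
      congr 2
      ext i j
      by_cases h : i = j <;>
        simp [Matrix.diagonal_apply, h, Real.mul_self_sqrt (hA.eigenvalues_nonneg j)]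

open Matrix in
lemma NN.exists_dual {m n : Type*} [Fintype m] [Fintype n] [DecidableEq n]
    (M : Matrix m n ℝ) :
    ∃ V : Matrix m n ℝ, (1 - Vᴴ * V).PosSemidef ∧
      Vᴴ * M = (Matrix.posSemidef_conjTranspose_mul_self M).sqrt ∧
      M = V * (Matrix.posSemidef_conjTranspose_mul_self M).sqrt := by
  set hP := Matrix.posSemidef_conjTranspose_mul_self M with hPdef
  have hH := hP.1
  set u : Matrix n n ℝ := (hH.eigenvectorUnitary : Matrix n n ℝ) with hu
  set d : n → ℝ := hH.eigenvalues with hd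
  have hu1 : uᴴ * u = 1 := by
    simpa [u, Matrix.star_eq_conjTranspose] using
      (Matrix.mem_unitaryGroup_iff'.mp hH.eigenvectorUnitary.2)
  have hu2 : u * uᴴ = 1 := by
    simpa [u, Matrix.star_eq_conjTranspose] using
      (Matrix.mem_unitaryGroup_iff.mp hH.eigenvectorUnitary.2)
  have hspec : Mᴴ * M = u * Matrix.diagonal d * uᴴ := by
    have := hH.spectral_theorem
    simpa [u, d, Matrix.star_eq_conjTranspose, RCLike.ofReal_real_eq_id] using this
  have hsqrt : hP.sqrt = u * Matrix.diagonal (fun i => Real.sqrt (d i)) * uᴴ := by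
    rw [Matrix.PosSemidef.sqrt]
    simp only [u, d, Matrix.star_eq_conjTranspose, RCLike.ofReal_real_eq_id,
      Function.comp_def, id]
  have hdnn : ∀ i, 0 ≤ d i := fun i => hP.eigenvalues_nonneg i
  set f : n → ℝ := fun i => if d i = 0 then 0 else (Real.sqrt (d i))⁻¹ with hf
  set g : n → ℝ := fun i => if d i = 0 then 0 else 1 with hg
  set V : Matrix m n ℝ := M * (u * Matrix.diagonal f * uᴴ) with hV
  have key : ∀ c e : n → ℝ, (u * Matrix.diagonal c * uᴴ) * (u * Matrix.diagonal e * uᴴ)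
      = u * Matrix.diagonal (fun i => c i * e i) * uᴴ := by
    intro c e
    calc u * Matrix.diagonal c * uᴴ * (u * Matrix.diagonal e * uᴴ)
        = u * Matrix.diagonal c * ((uᴴ * u) * (Matrix.diagonal e * uᴴ)) := by
          simp only [Matrix.mul_assoc]
      _ = u * (Matrix.diagonal c * Matrix.diagonal e) * uᴴ := by
          rw [hu1, Matrix.one_mul]; simp only [Matrix.mul_assoc]
      _ = u * Matrix.diagonal (fun i => c i * e i) * uᴴ := by
          rw [Matrix.diagonal_mul_diagonal]
  have hsym : (u * Matrix.diagonal f * uᴴ)ᴴ = u * Matrix.diagonal f * uᴴ := by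
    simp [Matrix.conjTranspose_mul, Matrix.diagonal_conjTranspose, Matrix.mul_assoc]
  have hVH : Vᴴ = (u * Matrix.diagonal f * uᴴ) * Mᴴ := by
    rw [hV, Matrix.conjTranspose_mul, hsym]
  -- scalar identities
  have sfd : ∀ i, f i * d i = Real.sqrt (d i) := by
    intro i
    by_cases h : d i = 0
    · simp [f, h]
    · have hs : Real.sqrt (d i) ≠ 0 := by
        simpa [Real.sqrt_eq_zero' ] using fun hc => h (le_antisymm hc (hdnn i))
      simp only [f, if_neg h]
      rw [inv_mul_eq_div, div_eq_iff hs]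
      exact (Real.mul_self_sqrt (hdnn i)).symm
  have sfdf : ∀ i, f i * d i * f i = g i := by
    intro i
    by_cases h : d i = 0
    · simp [f, g, h]
    · have hs : Real.sqrt (d i) ≠ 0 := by
        simpa [Real.sqrt_eq_zero'] using fun hc => h (le_antisymm hc (hdnn i))
      simp only [f, g, if_neg h]
      rw [show (Real.sqrt (d i))⁻¹ * d i * (Real.sqrt (d i))⁻¹
          = d i / (Real.sqrt (d i) * Real.sqrt (d i)) by ring,
        Real.mul_self_sqrt (hdnn i), div_self h]
  have sfs : ∀ i, f i * Real.sqrt (d i) = g i := by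
    intro i
    by_cases h : d i = 0
    · simp [f, g, h]
    · have hs : Real.sqrt (d i) ≠ 0 := by
        simpa [Real.sqrt_eq_zero'] using fun hc => h (le_antisymm hc (hdnn i))
      simp only [f, g, if_neg h]
      exact inv_mul_cancel₀ hs
  have sgd : ∀ i, (1 - g i) * d i * (1 - g i) = 0 := by
    intro i
    by_cases h : d i = 0 <;> simp [g, h]
  have hVHM : Vᴴ * M = hP.sqrt := by
    rw [hVH, Matrix.mul_assoc, hsqrt, hspec, key]
    rw [show (fun i => f i * d i) = (fun i => Real.sqrt (d i)) from funext sfd]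
  have hVHV : Vᴴ * V = u * Matrix.diagonal g * uᴴ := by
    calc Vᴴ * V
        = (u * Matrix.diagonal f * uᴴ) * ((Mᴴ * M) * (u * Matrix.diagonal f * uᴴ)) := by
          rw [hVH, hV]; simp only [Matrix.mul_assoc]
      _ = ((u * Matrix.diagonal f * uᴴ) * (u * Matrix.diagonal d * uᴴ))
            * (u * Matrix.diagonal f * uᴴ) := by
          rw [hspec]; simp only [Matrix.mul_assoc]
      _ = (u * Matrix.diagonal (fun i => f i * d i) * uᴴ) * (u * Matrix.diagonal f * uᴴ) := by
          rw [key]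
      _ = u * Matrix.diagonal (fun i => f i * d i * f i) * uᴴ := by rw [key]
      _ = u * Matrix.diagonal g * uᴴ := by rw [funext sfdf]
  have hone : (1 : Matrix n n ℝ) = u * Matrix.diagonal (fun _ => (1:ℝ)) * uᴴ := by
    rw [Matrix.diagonal_one, Matrix.mul_one, hu2]
  have key2 : u * Matrix.diagonal (fun _ => (1:ℝ)) * uᴴ - u * Matrix.diagonal g * uᴴ
      = u * Matrix.diagonal (fun i => 1 - g i) * uᴴ := by
    rw [← Matrix.sub_mul, ← Matrix.mul_sub, Matrix.diagonal_sub]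
  have hX : M * u * Matrix.diagonal (fun i => 1 - g i) = 0 := by
    rw [← Matrix.conjTranspose_mul_self_eq_zero]
    have hDH : (M * u * Matrix.diagonal (fun i => 1 - g i))ᴴ
        = Matrix.diagonal (fun i => 1 - g i) * (uᴴ * Mᴴ) := by
      simp [Matrix.conjTranspose_mul, Matrix.diagonal_conjTranspose, Matrix.mul_assoc]
    rw [hDH]
    calc Matrix.diagonal (fun i => 1 - g i) * (uᴴ * Mᴴ) * (M * u * Matrix.diagonal (fun i => 1 - g i))
        = Matrix.diagonal (fun i => 1 - g i) * (uᴴ * ((Mᴴ * M) * u)) * Matrix.diagonal (fun i => 1 - g i) := by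
          simp only [Matrix.mul_assoc]
      _ = Matrix.diagonal (fun i => 1 - g i) * Matrix.diagonal d * Matrix.diagonal (fun i => 1 - g i) := by
          rw [hspec]
          congr 2
          calc uᴴ * ((u * Matrix.diagonal d * uᴴ) * u)
              = (uᴴ * u) * Matrix.diagonal d * (uᴴ * u) := by simp only [Matrix.mul_assoc]
            _ = Matrix.diagonal d := by rw [hu1, Matrix.one_mul, Matrix.mul_one]
      _ = 0 := by
          rw [Matrix.diagonal_mul_diagonal, Matrix.diagonal_mul_diagonal, funext sgd,
            Matrix.diagonal_zero]
  refine ⟨V, ?_, hVHM, ?_⟩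
  · rw [hVHV]
    nth_rewrite 1 [hone]
    rw [key2]
    exact (Matrix.PosSemidef.diagonal (fun i => by by_cases h : d i = 0 <;> simp [g, h])
      ).mul_mul_conjTranspose_same u
  · have step : V * hP.sqrt = M * (u * Matrix.diagonal g * uᴴ) := by
      calc V * hP.sqrt
          = M * ((u * Matrix.diagonal f * uᴴ) * (u * Matrix.diagonal (fun i => Real.sqrt (d i)) * uᴴ)) := by
            rw [hV, hsqrt]; simp only [Matrix.mul_assoc]
        _ = M * (u * Matrix.diagonal (fun i => f i * Real.sqrt (d i)) * uᴴ) := by rw [key]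
        _ = M * (u * Matrix.diagonal g * uᴴ) := by rw [funext sfs]
    rw [step]
    have hdg : Matrix.diagonal g = Matrix.diagonal (fun _ => (1:ℝ)) - Matrix.diagonal (fun i => 1 - g i) := by
      rw [Matrix.diagonal_sub]; congr 1; funext i; ring
    rw [hdg, Matrix.mul_sub u, Matrix.sub_mul, Matrix.mul_sub M, ← hone,
      Matrix.mul_one, ← Matrix.mul_assoc, ← Matrix.mul_assoc, hX, Matrix.zero_mul, sub_zero]

open Matrix in
lemma NN.trace_nonneg {n : Type*} [Fintype n] [DecidableEq n] {M : Matrix n n ℝ} (hM : M.PosSemidef) :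
    0 ≤ M.trace := by
  rw [Matrix.trace]
  refine Finset.sum_nonneg fun i _ => ?_
  exact hM.diag_nonneg

open Matrix in
lemma NN.trace_le {m n : Type*} [Fintype m] [Fintype n] [DecidableEq n]
    (N U : Matrix m n ℝ) (hU : (1 - Uᴴ * U).PosSemidef) :
    (Uᴴ * N).trace ≤ nuclearNorm N := by
  obtain ⟨W, hW, hWN, hNW⟩ := NN.exists_dual N
  set S := (Matrix.posSemidef_conjTranspose_mul_self N).sqrt with hS
  have hSpsd : S.PosSemidef := (Matrix.posSemidef_conjTranspose_mul_self N).posSemidef_sqrt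
  set R := hSpsd.sqrt with hR
  have hRpsd : R.PosSemidef := hSpsd.posSemidef_sqrt
  have hRH : Rᴴ = R := hRpsd.1
  have hRR : R * R = S := hSpsd.sqrt_mul_self
  have hNN : nuclearNorm N = S.trace := rfl
  set X := U * R with hX
  set Y := W * R with hY
  have hXY : (Uᴴ * N).trace = (Xᴴ * Y).trace := by
    rw [hNW]
    calc (Uᴴ * (W * S)).trace = ((Uᴴ * W * R) * R).trace := by
          rw [← hRR]; simp only [Matrix.mul_assoc]
      _ = (R * (Uᴴ * W * R)).trace := Matrix.trace_mul_comm _ _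
      _ = (Xᴴ * Y).trace := by
          rw [hX, hY, Matrix.conjTranspose_mul, hRH]; simp only [Matrix.mul_assoc]
  have bound : ∀ (Z : Matrix m n ℝ), (1 - Zᴴ * Z).PosSemidef →
      ((Z * R)ᴴ * (Z * R)).trace ≤ S.trace := by
    intro Z hZ
    have h1 : Rᴴ * (1 - Zᴴ * Z) * R = S - (Z * R)ᴴ * (Z * R) := by
      calc Rᴴ * (1 - Zᴴ * Z) * R = R * R - R * (Zᴴ * Z) * R := by
            rw [hRH, Matrix.mul_sub, Matrix.sub_mul, Matrix.mul_one]
        _ = S - (Z * R)ᴴ * (Z * R) := by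
            rw [hRR, Matrix.conjTranspose_mul, hRH]
            congr 1
            simp only [Matrix.mul_assoc]
    have h2 : (0:ℝ) ≤ (Rᴴ * (1 - Zᴴ * Z) * R).trace :=
      NN.trace_nonneg (hZ.conjTranspose_mul_mul_same R)
    rw [h1, Matrix.trace_sub] at h2
    linarith
  have tXX := bound U hU
  have tYY := bound W hW
  have hsq : (0:ℝ) ≤ ((X - Y)ᴴ * (X - Y)).trace :=
    NN.trace_nonneg (Matrix.posSemidef_conjTranspose_mul_self _)
  have hexp : ((X - Y)ᴴ * (X - Y)).trace
      = (Xᴴ * X).trace - (Xᴴ * Y).trace - (Yᴴ * X).trace + (Yᴴ * Y).trace := by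
    rw [Matrix.conjTranspose_sub, Matrix.sub_mul, Matrix.mul_sub, Matrix.mul_sub,
      Matrix.trace_sub, Matrix.trace_sub, Matrix.trace_sub]
    ring
  have hYX : ∀ P Q : Matrix m n ℝ, (Pᴴ * Q).trace = (Qᴴ * P).trace := by
    intro P Q
    calc (Pᴴ * Q).trace = ((Pᴴ * Q)ᴴ).trace := by
          rw [Matrix.trace_conjTranspose, star_trivial]
      _ = (Qᴴ * P).trace := by
          rw [Matrix.conjTranspose_mul, Matrix.conjTranspose_conjTranspose]
  rw [hXY, hNN]
  rw [hexp, hYX Y X] at hsq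
  linarith

open Matrix in
lemma NN.trace_fromBlocks {a b : Type*} [Fintype a] [Fintype b]
    (A : Matrix a a ℝ) (B : Matrix a b ℝ) (C : Matrix b a ℝ) (D : Matrix b b ℝ) :
    (Matrix.fromBlocks A B C D).trace = A.trace + D.trace := by
  simp [Matrix.trace, Fintype.sum_sum_type, Matrix.diag]

open Matrix in
lemma NN.posSemidef_fromBlocks {a b : Type*} [Fintype a] [Fintype b]
    [DecidableEq a] [DecidableEq b] {X : Matrix a a ℝ} {Y : Matrix b b ℝ}
    (hX : X.PosSemidef) (hY : Y.PosSemidef) :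
    (Matrix.fromBlocks X 0 0 Y).PosSemidef := by
  have hXT : Xᵀ = X := (by simpa using hX.1 : X.IsSymm)
  have hYT : Yᵀ = Y := (by simpa using hY.1 : Y.IsSymm)
  refine Matrix.PosSemidef.of_dotProduct_mulVec_nonneg ?_ ?_
  · simp [Matrix.IsHermitian, Matrix.fromBlocks_transpose, hXT, hYT]
  · intro x
    have h1 := hX.dotProduct_mulVec_nonneg (x ∘ Sum.inl)
    have h2 := hY.dotProduct_mulVec_nonneg (x ∘ Sum.inr)
    have hsplit : dotProduct (star x) (Matrix.fromBlocks X 0 0 Y *ᵥ x)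
        = dotProduct (star (x ∘ Sum.inl)) (X *ᵥ (x ∘ Sum.inl))
          + dotProduct (star (x ∘ Sum.inr)) (Y *ᵥ (x ∘ Sum.inr)) := by
      simp [dotProduct, Matrix.mulVec, Fintype.sum_sum_type, mul_add,
        Finset.sum_add_distrib, Function.comp]
    rw [hsplit]
    positivity

open Matrix in
lemma NN.trace_split {c a b : Type*} [Fintype c] [Fintype a] [Fintype b]
    (X : Matrix c a ℝ) (Y : Matrix c b ℝ) (P : Matrix c a ℝ) (Q : Matrix c b ℝ) :
    ((Matrix.fromCols X Y)ᴴ * Matrix.fromCols P Q).trace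
      = (Xᴴ * P).trace + (Yᴴ * Q).trace := by
  rw [Matrix.conjTranspose_fromCols_eq_fromRows_conjTranspose,
    Matrix.fromRows_mul_fromCols, NN.trace_fromBlocks]

open Matrix in
theorem nuclearNorm_fromColumns_triple_le (m p q r : ℕ)
    (A : Matrix (Fin m) (Fin p) ℝ) (B : Matrix (Fin m) (Fin q) ℝ)
    (C : Matrix (Fin m) (Fin r) ℝ) :
    nuclearNorm (Matrix.fromCols A (Matrix.fromCols B C)) ≤
      nuclearNorm (Matrix.fromCols A C) + nuclearNorm (Matrix.fromCols B C) := by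
  classical
  obtain ⟨V, hVpsd, hVM, -⟩ :=
    NN.exists_dual (Matrix.fromCols A (Matrix.fromCols B C))
  set M := Matrix.fromCols A (Matrix.fromCols B C) with hMdef
  have hVtr : (Vᴴ * M).trace = nuclearNorm M := by rw [hVM]; rfl
  set V1 := V.toCols₁ with hV1
  set V2 := V.toCols₂.toCols₁ with hV2
  set V3 := V.toCols₂.toCols₂ with hV3
  have hVdec : V = Matrix.fromCols V1 (Matrix.fromCols V2 V3) := by
    rw [hV1, hV2, hV3, Matrix.fromCols_toCols, Matrix.fromCols_toCols]
  set W1 := Matrix.fromCols V1 V3 with hW1def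
  set W2 := Matrix.fromCols V2 (0 : Matrix (Fin m) (Fin r) ℝ) with hW2def
  -- contraction property for W1
  have hW1psd : (1 - W1ᴴ * W1).PosSemidef := by
    set e : Fin p ⊕ Fin r → Fin p ⊕ (Fin q ⊕ Fin r) := Sum.map id Sum.inr with he
    have heinj : Function.Injective e :=
      Function.Injective.sumMap (fun _ _ h => h) Sum.inr_injective
    have hsub : W1ᴴ * W1 = (Vᴴ * V).submatrix e e := by
      ext i j
      cases i <;> cases j <;>
        simp [hW1def, hV1, hV3, he, Matrix.mul_apply, Matrix.conjTranspose_apply,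
          Matrix.toCols₁, Matrix.toCols₂]
    have heq : 1 - W1ᴴ * W1 = (1 - Vᴴ * V).submatrix e e := by
      rw [hsub]
      ext i j
      simp [Matrix.submatrix_apply, Matrix.sub_apply, Matrix.one_apply, heinj.eq_iff]
    rw [heq]
    exact hVpsd.submatrix e
  -- contraction property for W2
  have hV2psd : (1 - V2ᴴ * V2).PosSemidef := by
    set e : Fin q → Fin p ⊕ (Fin q ⊕ Fin r) := fun j => Sum.inr (Sum.inl j) with he
    have heinj : Function.Injective e := by
      intro i j h
      simpa [he] using h
    have hsub : V2ᴴ * V2 = (Vᴴ * V).submatrix e e := by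
      ext i j
      simp [hV2, he, Matrix.mul_apply, Matrix.conjTranspose_apply,
        Matrix.toCols₁, Matrix.toCols₂]
    have heq : 1 - V2ᴴ * V2 = (1 - Vᴴ * V).submatrix e e := by
      rw [hsub]
      ext i j
      simp [Matrix.submatrix_apply, Matrix.sub_apply, Matrix.one_apply, heinj.eq_iff]
    rw [heq]
    exact hVpsd.submatrix e
  have hW2psd : (1 - W2ᴴ * W2).PosSemidef := by
    have hsub : W2ᴴ * W2 = Matrix.fromBlocks (V2ᴴ * V2) 0 0 0 := by
      ext i j
      cases i <;> cases j <;>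
        simp [hW2def, Matrix.mul_apply, Matrix.conjTranspose_apply]
    have heq : 1 - W2ᴴ * W2 = Matrix.fromBlocks (1 - V2ᴴ * V2) 0 0 1 := by
      rw [hsub]
      ext i j
      cases i <;> cases j <;>
        simp [Matrix.sub_apply, Matrix.one_apply]
    rw [heq]
    exact NN.posSemidef_fromBlocks hV2psd Matrix.PosSemidef.one
  have h1 := NN.trace_le (Matrix.fromCols A C) W1 hW1psd
  have h2 := NN.trace_le (Matrix.fromCols B C) W2 hW2psd
  rw [hW1def, NN.trace_split] at h1
  rw [hW2def, NN.trace_split] at h2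
  have h0 : ((0 : Matrix (Fin m) (Fin r) ℝ)ᴴ * C).trace = 0 := by simp
  rw [h0, add_zero] at h2
  have hM : nuclearNorm M
      = (V1ᴴ * A).trace + ((V2ᴴ * B).trace + (V3ᴴ * C).trace) := by
    rw [← hVtr, hVdec, hMdef, NN.trace_split, NN.trace_split]
  rw [hM]
  linarith
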